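/- Let p be a prime, e ≥ 1, and 0 ≤ k ≤ n. Let B ∈ Sym_n(𝔽_p) have corank k (i.e. rank n − k). Then for every m ≥ 0 and every H' ∈ Sym_m(ℤ/p^eℤ): the proportion, among all H ∈ Sym_n(ℤ/p^eℤ) whose reduction mod p equals B, of those H with Cok_*^{(p^e)}(H) ≃ Cok_*^{(p^e)}(H'), equals the proportion, among all H_k ∈ Sym_k(ℤ/p^eℤ) whose entries all lie in pℤ/p^eℤ, of those H_k with Cok_*^{(p^e)}(H_k) ≃ Cok_*^{(p^e)}(H'). -/

import Mathlib

open Matrix MeasureTheory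

/-- Congruence of square matrices over `R`: `B = U * A * Uᵀ` for some `U ∈ GL`. -/
def Matrix.Congruent {R : Type*} [CommRing R] {ι : Type*} [Fintype ι] [DecidableEq ι]
    (A B : Matrix ι ι R) : Prop :=
  ∃ U : (Matrix ι ι R)ˣ, (U : Matrix ι ι R) * A * (U : Matrix ι ι R)ᵀ = B

/-- Congruence of square matrices indexed by two (necessarily equipotent) index types. -/
def Matrix.CongruentTo {R : Type*} [CommRing R] {ι κ : Type*} [Fintype ι] [DecidableEq ι]
    [Fintype κ] [DecidableEq κ] (A : Matrix ι ι R) (B : Matrix κ κ R) : Prop :=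
  ∃ e : ι ≃ κ, (A.submatrix e.symm e.symm).Congruent B

namespace Matrix

variable {R : Type*} [CommRing R]
variable {ι κ μ ν : Type*} [Fintype ι] [DecidableEq ι] [Fintype κ] [DecidableEq κ]
  [Fintype μ] [DecidableEq μ] [Fintype ν] [DecidableEq ν]

/-- submatrix of a unit along an equiv, as a unit -/
def subUnit (U : (Matrix ι ι R)ˣ) (f : κ ≃ ι) : (Matrix κ κ R)ˣ where
  val := (U : Matrix ι ι R).submatrix f f
  inv := ((U⁻¹ : _ˣ) : Matrix ι ι R).submatrix f f
  val_inv := by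
    rw [Matrix.submatrix_mul_equiv _ _ ⇑f f ⇑f, Units.mul_inv, submatrix_one_equiv]
  inv_val := by
    rw [Matrix.submatrix_mul_equiv _ _ ⇑f f ⇑f, Units.inv_mul, submatrix_one_equiv]

@[simp] lemma subUnit_coe (U : (Matrix ι ι R)ˣ) (f : κ ≃ ι) :
    ((subUnit U f : (Matrix κ κ R)ˣ) : Matrix κ κ R) = (U : Matrix ι ι R).submatrix f f := rfl

theorem Congruent.refl (A : Matrix ι ι R) : A.Congruent A := ⟨1, by simp⟩

theorem Congruent.congruentTo {A B : Matrix ι ι R} (h : A.Congruent B) : A.CongruentTo B :=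
  ⟨Equiv.refl ι, by simpa using h⟩

theorem CongruentTo.refl (A : Matrix ι ι R) : A.CongruentTo A :=
  (Congruent.refl A).congruentTo

theorem congruentTo_submatrix (A : Matrix ι ι R) (f : ι ≃ κ) :
    A.CongruentTo (A.submatrix ⇑f.symm ⇑f.symm) :=
  ⟨f, 1, by simp⟩

theorem conj_submatrix (U : (Matrix ι ι R)ˣ) (A : Matrix ι ι R) (f : κ ≃ ι) :
    ((U : Matrix ι ι R) * A * (U : Matrix ι ι R)ᵀ).submatrix f f
      = (subUnit U f : Matrix κ κ R) * A.submatrix f f * (subUnit U f : Matrix κ κ R)ᵀ := by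
  rw [← Matrix.submatrix_mul_equiv ((U : Matrix ι ι R) * A) ((U : Matrix ι ι R)ᵀ) ⇑f f ⇑f,
    ← Matrix.submatrix_mul_equiv (U : Matrix ι ι R) A ⇑f f ⇑f,
    subUnit_coe, transpose_submatrix]

theorem CongruentTo.symm {A : Matrix ι ι R} {B : Matrix κ κ R} (h : A.CongruentTo B) :
    B.CongruentTo A := by
  obtain ⟨e, U, hU⟩ := h
  refine ⟨e.symm, (subUnit U e)⁻¹, ?_⟩
  have hB : B.submatrix ⇑e ⇑e
      = (subUnit U e : Matrix ι ι R) * A * (subUnit U e : Matrix ι ι R)ᵀ := by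
    rw [← hU, conj_submatrix, submatrix_submatrix, Equiv.symm_comp_self, submatrix_id_id]
  have he : ⇑e.symm.symm = ⇑e := by simp
  rw [he, hB]
  set V : (Matrix ι ι R)ˣ := subUnit U e
  calc ((V⁻¹ : _ˣ) : Matrix ι ι R) * ((V : Matrix ι ι R) * A * (V : Matrix ι ι R)ᵀ) *
      ((V⁻¹ : _ˣ) : Matrix ι ι R)ᵀ
      = (((V⁻¹ : _ˣ) : Matrix ι ι R) * (V : Matrix ι ι R)) * A *
        ((V : Matrix ι ι R)ᵀ * ((V⁻¹ : _ˣ) : Matrix ι ι R)ᵀ) := by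
        simp only [Matrix.mul_assoc]
    _ = A := by
        rw [Units.inv_mul, ← transpose_mul, Units.inv_mul, transpose_one, Matrix.one_mul,
          Matrix.mul_one]

theorem CongruentTo.trans {A : Matrix ι ι R} {B : Matrix κ κ R} {C : Matrix μ μ R}
    (h₁ : A.CongruentTo B) (h₂ : B.CongruentTo C) : A.CongruentTo C := by
  obtain ⟨e₁, U₁, hU₁⟩ := h₁
  obtain ⟨e₂, U₂, hU₂⟩ := h₂
  refine ⟨e₁.trans e₂, U₂ * subUnit U₁ e₂.symm, ?_⟩
  have hsub : A.submatrix ⇑(e₁.trans e₂).symm ⇑(e₁.trans e₂).symm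
      = (A.submatrix ⇑e₁.symm ⇑e₁.symm).submatrix ⇑e₂.symm ⇑e₂.symm := by
    rw [submatrix_submatrix]; rfl
  rw [hsub, ← hU₂, ← hU₁, conj_submatrix]
  simp only [Units.val_mul, transpose_mul, Matrix.mul_assoc]

end Matrix

set_option linter.unusedSectionVars false

namespace Matrix

variable {R : Type*} [CommRing R]
variable {ι κ μ ι' κ' : Type*} [Fintype ι] [DecidableEq ι] [Fintype κ] [DecidableEq κ]
  [Fintype μ] [DecidableEq μ] [Fintype ι'] [DecidableEq ι'] [Fintype κ'] [DecidableEq κ']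

/-- block diagonal unit -/
def blockUnit (U₁ : (Matrix ι ι R)ˣ) (U₂ : (Matrix κ κ R)ˣ) : (Matrix (ι ⊕ κ) (ι ⊕ κ) R)ˣ where
  val := fromBlocks (U₁ : Matrix ι ι R) 0 0 (U₂ : Matrix κ κ R)
  inv := fromBlocks ((U₁⁻¹ : _ˣ) : Matrix ι ι R) 0 0 ((U₂⁻¹ : _ˣ) : Matrix κ κ R)
  val_inv := by
    rw [fromBlocks_multiply]
    simp [Units.mul_inv, fromBlocks_one]
  inv_val := by
    rw [fromBlocks_multiply]
    simp [Units.inv_mul, fromBlocks_one]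

lemma fromBlocks_submatrix_sumMap (A : Matrix ι ι R) (B : Matrix ι κ R) (C : Matrix κ ι R)
    (D : Matrix κ κ R) (f : ι' → ι) (g : κ' → κ) :
    (fromBlocks A B C D).submatrix (Sum.map f g) (Sum.map f g)
      = fromBlocks (A.submatrix f f) (B.submatrix f g) (C.submatrix g f) (D.submatrix g g) := by
  ext i j
  rcases i with i | i <;> rcases j with j | j <;> rfl

theorem CongruentTo.fromBlocks' {A : Matrix ι ι R} {A' : Matrix ι' ι' R} {D : Matrix κ κ R}
    {D' : Matrix κ' κ' R} (hA : A.CongruentTo A') (hD : D.CongruentTo D') :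
    (fromBlocks A 0 0 D).CongruentTo (fromBlocks A' 0 0 D') := by
  obtain ⟨e₁, U₁, h₁⟩ := hA
  obtain ⟨e₂, U₂, h₂⟩ := hD
  refine ⟨e₁.sumCongr e₂, blockUnit U₁ U₂, ?_⟩
  have hcoe : ⇑(e₁.sumCongr e₂).symm = Sum.map ⇑e₁.symm ⇑e₂.symm := by
    rw [Equiv.sumCongr_symm]; rfl
  rw [hcoe, fromBlocks_submatrix_sumMap]
  have hbu : ((blockUnit U₁ U₂ : (Matrix (ι' ⊕ κ') (ι' ⊕ κ') R)ˣ) : Matrix _ _ R)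
      = fromBlocks (U₁ : Matrix ι' ι' R) 0 0 (U₂ : Matrix κ' κ' R) := rfl
  rw [hbu, fromBlocks_transpose, fromBlocks_multiply, fromBlocks_multiply, ← h₁, ← h₂]
  simp [Matrix.mul_assoc]

theorem congruentTo_fromBlocks_comm (A : Matrix ι ι R) (D : Matrix κ κ R) :
    (fromBlocks A 0 0 D).CongruentTo (fromBlocks D 0 0 A) := by
  refine ⟨Equiv.sumComm ι κ, 1, ?_⟩
  simp only [Units.val_one, Matrix.one_mul, transpose_one, Matrix.mul_one]
  ext i j
  rcases i with i | i <;> rcases j with j | j <;> rfl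

theorem congruentTo_fromBlocks_assoc (A : Matrix ι ι R) (D : Matrix κ κ R) (E : Matrix μ μ R) :
    (fromBlocks (fromBlocks A 0 0 D) 0 0 E).CongruentTo
      (fromBlocks A 0 0 (fromBlocks D 0 0 E)) := by
  refine ⟨Equiv.sumAssoc ι κ μ, 1, ?_⟩
  simp only [Units.val_one, Matrix.one_mul, transpose_one, Matrix.mul_one]
  ext i j
  rcases i with i | i | i <;> rcases j with j | j | j <;>
    simp [Equiv.sumAssoc, fromBlocks, submatrix_apply]

end Matrix

/-- Isomorphism of cokernels with quasi-pairing: `Cok_*(H₁) ≃ Cok_*(H₂)` iff after adjoining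
invertible symmetric blocks, the two block-diagonal matrices become congruent. -/
def QuasiPairedIso {q : ℕ} {ι κ : Type*} [Fintype ι] [DecidableEq ι] [Fintype κ] [DecidableEq κ]
    (H₁ : Matrix ι ι (ZMod q)) (H₂ : Matrix κ κ (ZMod q)) : Prop :=
  ∃ (k₁ k₂ : ℕ) (C₁ : Matrix (Fin k₁) (Fin k₁) (ZMod q)) (C₂ : Matrix (Fin k₂) (Fin k₂) (ZMod q)),
    C₁.IsSymm ∧ IsUnit C₁.det ∧ C₂.IsSymm ∧ IsUnit C₂.det ∧
    (Matrix.fromBlocks C₁ 0 0 H₁).CongruentTo (Matrix.fromBlocks C₂ 0 0 H₂)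

section QPI

open Matrix

variable {q : ℕ} {ι κ μ : Type*} [Fintype ι] [DecidableEq ι] [Fintype κ] [DecidableEq κ]
  [Fintype μ] [DecidableEq μ]

theorem quasiPairedIso_congr {H₁ : Matrix ι ι (ZMod q)} {H₂ : Matrix κ κ (ZMod q)}
    (h : H₁.CongruentTo H₂) (H' : Matrix μ μ (ZMod q)) :
    QuasiPairedIso H₁ H' ↔ QuasiPairedIso H₂ H' := by
  constructor <;> rintro ⟨k₁, k₂, C₁, C₂, h1, h2, h3, h4, hc⟩
  · exact ⟨k₁, k₂, C₁, C₂, h1, h2, h3, h4,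
      ((Matrix.CongruentTo.refl C₁).fromBlocks' h).symm.trans hc⟩
  · exact ⟨k₁, k₂, C₁, C₂, h1, h2, h3, h4,
      ((Matrix.CongruentTo.refl C₁).fromBlocks' h).trans hc⟩

lemma adjoin_block {t : ℕ} (C : Matrix (Fin t) (Fin t) (ZMod q)) (A : Matrix ι ι (ZMod q))
    (hCs : C.IsSymm) (hCd : IsUnit C.det) (hAs : A.IsSymm) (hAd : IsUnit A.det) :
    ∃ (s : ℕ) (C' : Matrix (Fin s) (Fin s) (ZMod q)), C'.IsSymm ∧ IsUnit C'.det ∧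
      (Matrix.fromBlocks C 0 0 A).CongruentTo C' := by
  set g : (Fin t ⊕ ι) ≃ Fin (t + Fintype.card ι) :=
    (Equiv.sumCongr (Equiv.refl (Fin t)) (Fintype.equivFin ι)).trans finSumFinEquiv with hg
  have hM : (Matrix.fromBlocks C 0 0 A).IsSymm := by
    rw [Matrix.IsSymm, Matrix.fromBlocks_transpose, hCs, hAs, Matrix.transpose_zero,
      Matrix.transpose_zero]
  refine ⟨t + Fintype.card ι, (Matrix.fromBlocks C 0 0 A).submatrix ⇑g.symm ⇑g.symm, ?_, ?_,
    Matrix.congruentTo_submatrix _ g⟩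
  · rw [Matrix.IsSymm, Matrix.transpose_submatrix, hM]
  · rw [Matrix.det_submatrix_equiv_self g.symm, Matrix.det_fromBlocks_zero₂₁]
    exact hCd.mul hAd

theorem quasiPairedIso_fromBlocks_iff {A : Matrix ι ι (ZMod q)} (hAs : A.IsSymm)
    (hAd : IsUnit A.det) (K : Matrix κ κ (ZMod q)) (H' : Matrix μ μ (ZMod q)) :
    QuasiPairedIso (Matrix.fromBlocks A 0 0 K) H' ↔ QuasiPairedIso K H' := by
  constructor <;> rintro ⟨k₁, k₂, C₁, C₂, h1, h2, h3, h4, hc⟩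
  · obtain ⟨s, C₁', hs1, hs2, hcc⟩ := adjoin_block C₁ A h1 h2 hAs hAd
    refine ⟨s, k₂, C₁', C₂, hs1, hs2, h3, h4, ?_⟩
    have step1 : (fromBlocks (fromBlocks C₁ 0 0 A) 0 0 K).CongruentTo (fromBlocks C₁' 0 0 K) :=
      hcc.fromBlocks' (Matrix.CongruentTo.refl K)
    have step2 := Matrix.congruentTo_fromBlocks_assoc C₁ A K
    exact step1.symm.trans (step2.trans hc)
  · obtain ⟨s₂, C₂', hs1, hs2, hcc₂⟩ := adjoin_block C₂ A h3 h4 hAs hAd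
    refine ⟨k₁, s₂, C₁, C₂', h1, h2, hs1, hs2, ?_⟩
    have a1 := (Matrix.CongruentTo.refl C₁).fromBlocks' (Matrix.congruentTo_fromBlocks_comm A K)
    have a2 := Matrix.congruentTo_fromBlocks_assoc C₁ K A
    have a3 := hc.fromBlocks' (Matrix.CongruentTo.refl A)
    have a4 := Matrix.congruentTo_fromBlocks_assoc C₂ H' A
    have a5 := (Matrix.CongruentTo.refl C₂).fromBlocks' (Matrix.congruentTo_fromBlocks_comm H' A)
    have a6 := Matrix.congruentTo_fromBlocks_assoc C₂ A H'
    have a7 := hcc₂.fromBlocks' (Matrix.CongruentTo.refl H')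
    exact a1.trans (a2.symm.trans (a3.trans (a4.trans (a5.trans (a6.symm.trans a7)))))

end QPI

section ZModLemmas

variable {p e : ℕ} (hdvd : p ∣ p ^ e)

lemma pi_eq_zero_iff' (x : ZMod (p ^ e)) [NeZero (p ^ e)] :
    ZMod.castHom hdvd (ZMod p) x = 0 ↔ (p : ZMod (p ^ e)) ∣ x := by
  constructor
  · intro h
    have hx : ((x.val : ℕ) : ZMod p) = 0 := by
      have h2 : ZMod.castHom hdvd (ZMod p) ((x.val : ℕ) : ZMod (p ^ e)) = 0 := by
        rwa [ZMod.natCast_zmod_val]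
      rwa [map_natCast] at h2
    have hdv : p ∣ x.val := (ZMod.natCast_eq_zero_iff _ _).mp hx
    obtain ⟨c, hc⟩ := hdv
    refine ⟨(c : ZMod (p ^ e)), ?_⟩
    rw [← ZMod.natCast_zmod_val x, hc]
    push_cast
    ring
  · rintro ⟨y, rfl⟩
    rw [_root_.map_mul, map_natCast, ZMod.natCast_self, zero_mul]

lemma isUnit_iff_pi_ne' (hp : p.Prime) (x : ZMod (p ^ e)) [NeZero (p ^ e)] :
    IsUnit x ↔ ZMod.castHom hdvd (ZMod p) x ≠ 0 := by
  haveI : Fact p.Prime := ⟨hp⟩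
  constructor
  · intro h hx
    exact (h.map (ZMod.castHom hdvd (ZMod p))).ne_zero hx
  · intro h
    rw [← ZMod.natCast_zmod_val x, ZMod.isUnit_iff_coprime]
    have hnd : ¬ p ∣ x.val := by
      intro hdv
      refine h ?_
      rw [← ZMod.natCast_zmod_val x, map_natCast]
      exact (ZMod.natCast_eq_zero_iff _ _).mpr hdv
    exact Nat.Coprime.pow_right e (((Nat.Prime.coprime_iff_not_dvd hp).mpr hnd).symm)

lemma pi_lift' (x : ZMod p) [NeZero p] :
    ZMod.castHom hdvd (ZMod p) ((x.val : ZMod (p ^ e))) = x := by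
  rw [map_natCast, ZMod.natCast_zmod_val]

lemma dvd_iff_map_eq_zero' {ι κ : Type*} (M : Matrix ι κ (ZMod (p ^ e))) [NeZero (p ^ e)] :
    (∀ i j, (p : ZMod (p ^ e)) ∣ M i j) ↔ M.map (ZMod.castHom hdvd (ZMod p)) = 0 := by
  constructor
  · intro h
    ext i j
    exact (pi_eq_zero_iff' hdvd _).mpr (h i j)
  · intro h i j
    refine (pi_eq_zero_iff' hdvd _).mp ?_
    exact congrFun (congrFun h i) j

end ZModLemmas

namespace Matrix

variable {R : Type*} [CommRing R] {ι κ : Type*} [Fintype ι] [DecidableEq ι]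
  [Fintype κ] [DecidableEq κ]

lemma conj_isSymm {S : Matrix ι ι R} (hS : Sᵀ = S) (C : Matrix ι κ R) :
    (Cᵀ * S * C)ᵀ = Cᵀ * S * C := by
  rw [transpose_mul, transpose_mul, transpose_transpose, hS, Matrix.mul_assoc]

theorem congruent_schur {A : Matrix ι ι R} (hAs : A.IsSymm) (hAd : IsUnit A.det)
    (C : Matrix ι κ R) (D : Matrix κ κ R) :
    (fromBlocks A C Cᵀ D).Congruent (fromBlocks A 0 0 (D - Cᵀ * A⁻¹ * C)) := by
  have hAinv : A⁻¹ᵀ = A⁻¹ := by rw [transpose_nonsing_inv, hAs]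
  have e1 : A * (A⁻¹ * C) = C := Matrix.mul_nonsing_inv_cancel_left _ C hAd
  have e2 : Cᵀ * A⁻¹ * A = Cᵀ := Matrix.nonsing_inv_mul_cancel_right _ Cᵀ hAd
  refine ⟨⟨fromBlocks 1 0 (-(Cᵀ * A⁻¹)) 1, fromBlocks 1 0 (Cᵀ * A⁻¹) 1, ?_, ?_⟩, ?_⟩
  · rw [fromBlocks_multiply]
    simp
  · rw [fromBlocks_multiply]
    simp
  · show fromBlocks 1 0 (-(Cᵀ * A⁻¹)) 1 * fromBlocks A C Cᵀ D *
      (fromBlocks 1 0 (-(Cᵀ * A⁻¹)) 1)ᵀ = _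
    rw [fromBlocks_transpose, transpose_one, transpose_zero, transpose_neg, transpose_mul,
      transpose_transpose, hAinv, fromBlocks_multiply, fromBlocks_multiply]
    simp only [Matrix.one_mul, Matrix.mul_one, Matrix.zero_mul, Matrix.mul_zero, add_zero,
      zero_add, Matrix.neg_mul, Matrix.mul_neg, e1, e2, Matrix.mul_assoc, neg_add_cancel,
      Matrix.zero_mul, neg_add_eq_sub]
    simp

def conjEquiv (V : (Matrix ι ι R)ˣ) : Matrix ι ι R ≃ Matrix ι ι R where
  toFun H := (V : Matrix ι ι R) * H * (V : Matrix ι ι R)ᵀ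
  invFun H := ((V⁻¹ : _ˣ) : Matrix ι ι R) * H * ((V⁻¹ : _ˣ) : Matrix ι ι R)ᵀ
  left_inv H := by
    dsimp only
    have h : ((V⁻¹ : _ˣ) : Matrix ι ι R) * ((V : Matrix ι ι R) * H * (V : Matrix ι ι R)ᵀ) *
        ((V⁻¹ : _ˣ) : Matrix ι ι R)ᵀ
        = (((V⁻¹ : _ˣ) : Matrix ι ι R) * (V : Matrix ι ι R)) * H *
          ((V : Matrix ι ι R)ᵀ * ((V⁻¹ : _ˣ) : Matrix ι ι R)ᵀ) := by
      simp only [Matrix.mul_assoc]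
    rw [h, Units.inv_mul, ← transpose_mul, Units.inv_mul, transpose_one, Matrix.one_mul,
      Matrix.mul_one]
  right_inv H := by
    dsimp only
    have h : (V : Matrix ι ι R) * (((V⁻¹ : _ˣ) : Matrix ι ι R) * H *
        ((V⁻¹ : _ˣ) : Matrix ι ι R)ᵀ) * (V : Matrix ι ι R)ᵀ
        = ((V : Matrix ι ι R) * ((V⁻¹ : _ˣ) : Matrix ι ι R)) * H *
          (((V⁻¹ : _ˣ) : Matrix ι ι R)ᵀ * (V : Matrix ι ι R)ᵀ) := by
      simp only [Matrix.mul_assoc]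
    rw [h, Units.mul_inv, ← transpose_mul, Units.mul_inv, transpose_one, Matrix.one_mul,
      Matrix.mul_one]

@[simp] lemma conjEquiv_apply (V : (Matrix ι ι R)ˣ) (H : Matrix ι ι R) :
    conjEquiv V H = (V : Matrix ι ι R) * H * (V : Matrix ι ι R)ᵀ := rfl

theorem congruentTo_conj_reindex (V : (Matrix ι ι R)ˣ) (f : ι ≃ κ) (H : Matrix ι ι R) :
    H.CongruentTo (((V : Matrix ι ι R) * H * (V : Matrix ι ι R)ᵀ).submatrix ⇑f.symm ⇑f.symm) :=
  ⟨f, subUnit V f.symm, (conj_submatrix V H f.symm).symm⟩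

end Matrix

section KeyCount

open Matrix

variable {α β : Type*}

lemma tb11_map {ι κ : Type*} (M : Matrix (ι ⊕ κ) (ι ⊕ κ) α) (f : α → β) :
    (M.map f).toBlocks₁₁ = M.toBlocks₁₁.map f := rfl

lemma tb12_map {ι κ : Type*} (M : Matrix (ι ⊕ κ) (ι ⊕ κ) α) (f : α → β) :
    (M.map f).toBlocks₁₂ = M.toBlocks₁₂.map f := rfl

lemma tb22_map {ι κ : Type*} (M : Matrix (ι ⊕ κ) (ι ⊕ κ) α) (f : α → β) :
    (M.map f).toBlocks₂₂ = M.toBlocks₂₂.map f := rfl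

lemma tb11_transpose {ι κ : Type*} (M : Matrix (ι ⊕ κ) (ι ⊕ κ) α) :
    (Mᵀ).toBlocks₁₁ = M.toBlocks₁₁ᵀ := rfl

lemma tb22_transpose {ι κ : Type*} (M : Matrix (ι ⊕ κ) (ι ⊕ κ) α) :
    (Mᵀ).toBlocks₂₂ = M.toBlocks₂₂ᵀ := rfl

lemma submatrix_eq_iff {ι κ : Type*} (f : ι ≃ κ) (X : Matrix ι ι α) (Y : Matrix κ κ α) :
    X.submatrix ⇑f.symm ⇑f.symm = Y ↔ X = Y.submatrix ⇑f ⇑f := by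
  constructor
  · rintro rfl
    rw [Matrix.submatrix_submatrix, Equiv.symm_comp_self, Matrix.submatrix_id_id]
  · rintro rfl
    rw [Matrix.submatrix_submatrix, Equiv.self_comp_symm, Matrix.submatrix_id_id]

lemma key_count {p e : ℕ} (hp : p.Prime) (hdvd : p ∣ p ^ e)
    {n r k : ℕ} (σ : Fin n ≃ (Fin r ⊕ Fin k))
    (B : Matrix (Fin n) (Fin n) (ZMod p))
    (B₁ : Matrix (Fin r) (Fin r) (ZMod p)) (hB₁d : IsUnit B₁.det)
    (V : (Matrix (Fin n) (Fin n) (ZMod (p ^ e)))ˣ)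
    (hV : ((V : Matrix (Fin n) (Fin n) (ZMod (p ^ e))).map (ZMod.castHom hdvd (ZMod p))) * B *
        ((V : Matrix (Fin n) (Fin n) (ZMod (p ^ e))).map (ZMod.castHom hdvd (ZMod p)))ᵀ
        = (Matrix.fromBlocks B₁ 0 0 (0 : Matrix (Fin k) (Fin k) (ZMod p))).submatrix ⇑σ ⇑σ)
    (Q : ∀ (ι : Type) [Fintype ι] [DecidableEq ι], Matrix ι ι (ZMod (p ^ e)) → Prop)
    (hQc : ∀ {ι κ : Type} [Fintype ι] [DecidableEq ι] [Fintype κ] [DecidableEq κ]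
      {M : Matrix ι ι (ZMod (p ^ e))} {N : Matrix κ κ (ZMod (p ^ e))},
      M.CongruentTo N → (Q ι M ↔ Q κ N))
    (hQa : ∀ {ι κ : Type} [Fintype ι] [DecidableEq ι] [Fintype κ] [DecidableEq κ]
      {A : Matrix ι ι (ZMod (p ^ e))} (K : Matrix κ κ (ZMod (p ^ e))),
      A.IsSymm → IsUnit A.det → (Q _ (Matrix.fromBlocks A 0 0 K) ↔ Q _ K)) :
    Nat.card {H : Matrix (Fin n) (Fin n) (ZMod (p ^ e)) //
        H.IsSymm ∧ H.map (ZMod.castHom hdvd (ZMod p)) = B ∧ Q _ H}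
      = (Nat.card {A : Matrix (Fin r) (Fin r) (ZMod (p ^ e)) //
          A.IsSymm ∧ A.map (ZMod.castHom hdvd (ZMod p)) = B₁}
        * Nat.card {C : Matrix (Fin r) (Fin k) (ZMod (p ^ e)) //
            C.map (ZMod.castHom hdvd (ZMod p)) = 0})
        * Nat.card {K : Matrix (Fin k) (Fin k) (ZMod (p ^ e)) //
            K.IsSymm ∧ (∀ i j, (p : ZMod (p ^ e)) ∣ K i j) ∧ Q _ K} := by
  classical
  haveI : NeZero (p ^ e) := ⟨pow_ne_zero e hp.pos.ne'⟩
  haveI : Fact p.Prime := ⟨hp⟩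
  set π : ZMod (p ^ e) →+* ZMod p := ZMod.castHom hdvd (ZMod p) with hπ
  set B'' : Matrix (Fin r ⊕ Fin k) (Fin r ⊕ Fin k) (ZMod p) :=
    Matrix.fromBlocks B₁ 0 0 (0 : Matrix (Fin k) (Fin k) (ZMod p)) with hB''
  set V₀ : Matrix (Fin n) (Fin n) (ZMod p) :=
    (V : Matrix (Fin n) (Fin n) (ZMod (p ^ e))).map π with hV₀
  set G : Matrix (Fin n) (Fin n) (ZMod (p ^ e))
      ≃ Matrix (Fin r ⊕ Fin k) (Fin r ⊕ Fin k) (ZMod (p ^ e)) :=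
    (Matrix.conjEquiv V).trans (Matrix.reindex σ σ) with hG
  have hGH : ∀ H : Matrix (Fin n) (Fin n) (ZMod (p ^ e)),
      G H = ((V : Matrix (Fin n) (Fin n) (ZMod (p ^ e))) * H *
        (V : Matrix (Fin n) (Fin n) (ZMod (p ^ e)))ᵀ).submatrix ⇑σ.symm ⇑σ.symm := fun H => rfl
  set VU₀ : (Matrix (Fin n) (Fin n) (ZMod p))ˣ :=
    Units.map (RingHom.toMonoidHom (RingHom.mapMatrix π)) V with hVU₀
  have hVU₀c : ((VU₀ : (Matrix (Fin n) (Fin n) (ZMod p))ˣ) : Matrix (Fin n) (Fin n) (ZMod p))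
      = V₀ := rfl
  have hAunit : ∀ A : Matrix (Fin r) (Fin r) (ZMod (p ^ e)), A.map π = B₁ → IsUnit A.det := by
    intro A hA
    refine (isUnit_iff_pi_ne' hdvd hp _).mpr ?_
    rw [← hπ, RingHom.map_det, RingHom.mapMatrix_apply, hA]
    exact hB₁d.ne_zero
  have hfs : ∀ a b : ZMod (p ^ e), π (a - b) = π a - π b := fun a b => map_sub π a b
  have hfa : ∀ a b : ZMod (p ^ e), π (a + b) = π a + π b := fun a b => map_add π a b
  have E1 : {H : Matrix (Fin n) (Fin n) (ZMod (p ^ e)) // H.IsSymm ∧ H.map π = B ∧ Q _ H}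
      ≃ {H : Matrix (Fin r ⊕ Fin k) (Fin r ⊕ Fin k) (ZMod (p ^ e)) //
          H.IsSymm ∧ H.map π = B'' ∧ Q _ H} := by
    refine G.subtypeEquiv fun H => ?_
    have ht : ∀ X : Matrix (Fin n) (Fin n) (ZMod (p ^ e)), (G X)ᵀ = G Xᵀ := by
      intro X
      rw [hGH, hGH, Matrix.transpose_submatrix, Matrix.transpose_mul, Matrix.transpose_mul,
        Matrix.transpose_transpose, Matrix.mul_assoc]
    have iff1 : H.IsSymm ↔ (G H).IsSymm := by
      constructor
      · intro h
        rw [Matrix.IsSymm, ht H, h]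
      · intro h
        rw [Matrix.IsSymm, ht H] at h
        exact G.injective h
    have hGm : (G H).map π = (V₀ * H.map π * V₀ᵀ).submatrix ⇑σ.symm ⇑σ.symm := by
      rw [hGH, ← Matrix.submatrix_map, Matrix.map_mul, Matrix.map_mul, Matrix.transpose_map, hV₀]
    have iff2 : H.map π = B ↔ (G H).map π = B'' := by
      rw [hGm, submatrix_eq_iff σ, ← hV]
      constructor
      · intro h
        rw [h]
      · intro h
        have h2 : Matrix.conjEquiv VU₀ (H.map π) = Matrix.conjEquiv VU₀ B := by
          rw [Matrix.conjEquiv_apply, Matrix.conjEquiv_apply, hVU₀c]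
          exact h
        exact (Matrix.conjEquiv VU₀).injective h2
    have iff3 : Q _ H ↔ Q _ (G H) := by
      rw [hGH]
      exact hQc (Matrix.congruentTo_conj_reindex V σ H)
    exact and_congr iff1 (and_congr iff2 iff3)
  have E2 : {H : Matrix (Fin r ⊕ Fin k) (Fin r ⊕ Fin k) (ZMod (p ^ e)) //
          H.IsSymm ∧ H.map π = B'' ∧ Q _ H}
      ≃ (({A : Matrix (Fin r) (Fin r) (ZMod (p ^ e)) // A.IsSymm ∧ A.map π = B₁}
          × {C : Matrix (Fin r) (Fin k) (ZMod (p ^ e)) // C.map π = 0})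
        × {K : Matrix (Fin k) (Fin k) (ZMod (p ^ e)) //
            K.IsSymm ∧ (∀ i j, (p : ZMod (p ^ e)) ∣ K i j) ∧ Q _ K}) := by
    refine ⟨fun x => ⟨⟨⟨x.1.toBlocks₁₁, ?_, ?_⟩, ⟨x.1.toBlocks₁₂, ?_⟩⟩,
        ⟨x.1.toBlocks₂₂ - x.1.toBlocks₁₂ᵀ * x.1.toBlocks₁₁⁻¹ * x.1.toBlocks₁₂, ?_, ?_, ?_⟩⟩,
      fun y => ⟨Matrix.fromBlocks y.1.1.1 y.1.2.1 (y.1.2.1)ᵀ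
          (y.2.1 + (y.1.2.1)ᵀ * (y.1.1.1)⁻¹ * y.1.2.1), ?_, ?_, ?_⟩, ?_, ?_⟩
    · -- A symm
      rw [Matrix.IsSymm, ← tb11_transpose, x.2.1]
    · -- A red
      rw [← tb11_map, x.2.2.1, hB'']
      exact Matrix.toBlocks_fromBlocks₁₁ _ _ _ _
    · -- C red
      rw [← tb12_map, x.2.2.1, hB'']
      exact Matrix.toBlocks_fromBlocks₁₂ _ _ _ _
    · -- K symm
      have hAs : x.1.toBlocks₁₁ᵀ = x.1.toBlocks₁₁ := by
        rw [← tb11_transpose, x.2.1]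
      have hAinv : (x.1.toBlocks₁₁⁻¹)ᵀ = x.1.toBlocks₁₁⁻¹ := by
        rw [Matrix.transpose_nonsing_inv, hAs]
      rw [Matrix.IsSymm, Matrix.transpose_sub, Matrix.conj_isSymm hAinv, ← tb22_transpose, x.2.1]
    · -- K dvd
      have hCred : x.1.toBlocks₁₂.map π = 0 := by
        rw [← tb12_map, x.2.2.1, hB'']
        exact Matrix.toBlocks_fromBlocks₁₂ _ _ _ _
      have hDred : x.1.toBlocks₂₂.map π = 0 := by
        rw [← tb22_map, x.2.2.1, hB'']
        exact Matrix.toBlocks_fromBlocks₂₂ _ _ _ _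
      refine (dvd_iff_map_eq_zero' hdvd _).mpr ?_
      rw [Matrix.map_sub ⇑π hfs, hDred, Matrix.map_mul, Matrix.map_mul, Matrix.transpose_map,
        hCred]
      simp
    · -- K Q
      have hAs : x.1.toBlocks₁₁.IsSymm := by
        rw [Matrix.IsSymm, ← tb11_transpose, x.2.1]
      have hAd : IsUnit x.1.toBlocks₁₁.det := by
        refine hAunit _ ?_
        rw [← tb11_map, x.2.2.1, hB'']
        exact Matrix.toBlocks_fromBlocks₁₁ _ _ _ _
      have h21 : x.1.toBlocks₂₁ = x.1.toBlocks₁₂ᵀ := by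
        conv_lhs => rw [← x.2.1]
        rfl
      have hH : x.1 = Matrix.fromBlocks x.1.toBlocks₁₁ x.1.toBlocks₁₂ (x.1.toBlocks₁₂)ᵀ
          x.1.toBlocks₂₂ := by
        conv_lhs => rw [← Matrix.fromBlocks_toBlocks x.1]
        rw [h21]
      have hcong : x.1.CongruentTo (Matrix.fromBlocks x.1.toBlocks₁₁ 0 0
          (x.1.toBlocks₂₂ - x.1.toBlocks₁₂ᵀ * x.1.toBlocks₁₁⁻¹ * x.1.toBlocks₁₂)) := by
        refine Matrix.Congruent.congruentTo ?_
        conv_lhs => rw [hH]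
        exact Matrix.congruent_schur hAs hAd _ _
      exact (hQa _ hAs hAd).mp ((hQc hcong).mp x.2.2.2)
    · -- invFun symm
      obtain ⟨hAs, hAred⟩ := y.1.1.2
      obtain ⟨hKs, hKdvd, hKQ⟩ := y.2.2
      have hAinv : (y.1.1.1⁻¹)ᵀ = y.1.1.1⁻¹ := by
        rw [Matrix.transpose_nonsing_inv, hAs]
      rw [Matrix.IsSymm, Matrix.fromBlocks_transpose, Matrix.transpose_transpose, hAs,
        Matrix.transpose_add, hKs, Matrix.conj_isSymm hAinv]
    · -- invFun red
      obtain ⟨hAs, hAred⟩ := y.1.1.2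
      have hCred := y.1.2.2
      obtain ⟨hKs, hKdvd, hKQ⟩ := y.2.2
      have hKred : y.2.1.map π = 0 := (dvd_iff_map_eq_zero' hdvd _).mp hKdvd
      rw [Matrix.fromBlocks_map, hAred, Matrix.transpose_map, hCred,
        Matrix.map_add ⇑π hfa, hKred, Matrix.map_mul, Matrix.map_mul, Matrix.transpose_map, hCred]
      simp [hB'']
    · -- invFun Q
      obtain ⟨hAs, hAred⟩ := y.1.1.2
      obtain ⟨hKs, hKdvd, hKQ⟩ := y.2.2
      have hAd : IsUnit y.1.1.1.det := hAunit _ hAred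
      have hcong := Matrix.congruent_schur hAs hAd y.1.2.1
        (y.2.1 + (y.1.2.1)ᵀ * (y.1.1.1)⁻¹ * y.1.2.1)
      rw [add_sub_cancel_right] at hcong
      exact (hQc hcong.congruentTo).mpr ((hQa _ hAs hAd).mpr hKQ)
    · -- left_inv
      intro x
      apply Subtype.ext
      dsimp only
      rw [sub_add_cancel]
      have h21 : x.1.toBlocks₂₁ = x.1.toBlocks₁₂ᵀ := by
        conv_lhs => rw [← x.2.1]
        rfl
      conv_rhs => rw [← Matrix.fromBlocks_toBlocks x.1]
      rw [h21]
    · -- right_inv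
      intro y
      refine Prod.ext (Prod.ext ?_ ?_) ?_
      · apply Subtype.ext
        dsimp only
        exact Matrix.toBlocks_fromBlocks₁₁ _ _ _ _
      · apply Subtype.ext
        dsimp only
        exact Matrix.toBlocks_fromBlocks₁₂ _ _ _ _
      · apply Subtype.ext
        dsimp only
        rw [Matrix.toBlocks_fromBlocks₂₂, Matrix.toBlocks_fromBlocks₁₂,
          Matrix.toBlocks_fromBlocks₁₁, add_sub_cancel_right]
  rw [Nat.card_congr (E1.trans E2), Nat.card_prod, Nat.card_prod]

end KeyCount

section NormalForm

open Matrix Module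

lemma exists_normal_form {F : Type*} [Field F] {n k r : ℕ} (hrk : r + k = n)
    (B : Matrix (Fin n) (Fin n) F) (hBs : B.IsSymm) (hBr : B.rank = r)
    (σ : Fin n ≃ (Fin r ⊕ Fin k)) :
    ∃ (V₀ : Matrix (Fin n) (Fin n) F) (B₁ : Matrix (Fin r) (Fin r) F),
      IsUnit V₀.det ∧ B₁.IsSymm ∧ IsUnit B₁.det ∧
      V₀ * B * V₀ᵀ = (Matrix.fromBlocks B₁ 0 0 (0 : Matrix (Fin k) (Fin k) F)).submatrix ⇑σ ⇑σ := by
  classical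
  set f := B.mulVecLin with hf
  have hrange : finrank F (LinearMap.range f) = r := hBr
  have hker : finrank F (LinearMap.ker f) = k := by
    have h1 := LinearMap.finrank_range_add_finrank_ker f
    rw [hrange, Module.finrank_pi, Fintype.card_fin] at h1
    omega
  obtain ⟨q, hq⟩ := Submodule.exists_isCompl (LinearMap.ker f)
  have hqr : finrank F q = r := by
    have h2 := Submodule.finrank_add_eq_of_isCompl hq
    rw [hker, Module.finrank_pi, Fintype.card_fin] at h2
    omega
  set bq : Basis (Fin r) F q := Module.finBasisOfFinrankEq F q hqr with hbq
  set bk : Basis (Fin k) F (LinearMap.ker f) := Module.finBasisOfFinrankEq F _ hker with hbk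
  set b : Basis (Fin r ⊕ Fin k) F (Fin n → F) :=
    (bq.prod bk).map (Submodule.prodEquivOfIsCompl q (LinearMap.ker f) hq.symm) with hb
  have hinl : ∀ i, b (Sum.inl i) = (bq i : Fin n → F) := by
    intro i
    rw [hb, Basis.map_apply]
    have h : (bq.prod bk) (Sum.inl i) = ((bq i : q), (0 : LinearMap.ker f)) :=
      Prod.ext (bq.prod_apply_inl_fst bk i) (bq.prod_apply_inl_snd bk i)
    rw [h, Submodule.coe_prodEquivOfIsCompl']
    simp
  have hinr : ∀ i, b (Sum.inr i) = (bk i : Fin n → F) := by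
    intro i
    rw [hb, Basis.map_apply]
    have h : (bq.prod bk) (Sum.inr i) = ((0 : q), (bk i : LinearMap.ker f)) :=
      Prod.ext (bq.prod_apply_inr_fst bk i) (bq.prod_apply_inr_snd bk i)
    rw [h, Submodule.coe_prodEquivOfIsCompl']
    simp
  -- the bilinear pairing
  set β : (Fin n → F) → (Fin n → F) → F := fun u v => u ⬝ᵥ B.mulVec v with hβ
  have hβsymm : ∀ u v, β u v = β v u := by
    intro u v
    rw [hβ]
    dsimp only
    rw [Matrix.dotProduct_mulVec, ← Matrix.mulVec_transpose, hBs, dotProduct_comm]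
  have hkerβ : ∀ u v, v ∈ LinearMap.ker f → β u v = 0 := by
    intro u v hv
    have : B.mulVec v = 0 := by
      have := LinearMap.mem_ker.mp hv
      rwa [hf, Matrix.mulVecLin_apply] at this
    rw [hβ]
    dsimp only
    rw [this, dotProduct_zero]
  set B₁ : Matrix (Fin r) (Fin r) F :=
    Matrix.of (fun i j => β (b (Sum.inl i)) (b (Sum.inl j))) with hB₁
  set V₀ : Matrix (Fin n) (Fin n) F := Matrix.of (fun i x => b (σ i) x) with hV₀
  have hVB : ∀ i j, (V₀ * B * V₀ᵀ) i j = β (b (σ i)) (b (σ j)) := by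
    intro i j
    rw [Matrix.mul_assoc]
    simp only [hV₀, hβ, Matrix.mul_apply, Matrix.transpose_apply, Matrix.of_apply,
      Matrix.mulVec, dotProduct, Finset.mul_sum]
  -- B₁ is symmetric
  have hB₁s : B₁.IsSymm := by
    ext i j
    rw [Matrix.transpose_apply, hB₁]
    exact hβsymm _ _
  -- B₁ is invertible
  have hB₁inj : ∀ c : Fin r → F, B₁.mulVec c = 0 → c = 0 := by
    intro c hc
    set v : Fin n → F := ∑ j, c j • (b (Sum.inl j) : Fin n → F) with hv
    have hlin : ∀ u, β u v = ∑ j, c j * β u (b (Sum.inl j)) := by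
      intro u
      rw [hβ]
      dsimp only
      rw [hv]
      have hmv : B *ᵥ (∑ j, c j • (b (Sum.inl j) : Fin n → F))
          = ∑ j, c j • (B *ᵥ (b (Sum.inl j) : Fin n → F)) := by
        rw [← Matrix.mulVecLin_apply, map_sum]
        simp [Matrix.mulVecLin_apply]
      rw [hmv]
      simp only [dotProduct, Finset.sum_apply, Pi.smul_apply, smul_eq_mul, Finset.mul_sum]
      rw [Finset.sum_comm]
      refine Finset.sum_congr rfl fun j _ => ?_
      refine Finset.sum_congr rfl fun x _ => ?_
      ring
    have hβv : ∀ t, β (b t) v = 0 := by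
      rintro (i | i)
      · rw [hlin]
        have hci := congrFun hc i
        simp only [Matrix.mulVec, dotProduct, Pi.zero_apply] at hci
        calc ∑ j, c j * β (b (Sum.inl i)) (b (Sum.inl j))
            = ∑ j, B₁ i j * c j := Finset.sum_congr rfl fun j _ => mul_comm _ _
          _ = 0 := hci
      · rw [hβsymm]
        exact hkerβ _ _ (by rw [hinr]; exact (bk i).2)
    have hBv : B.mulVec v = 0 := by
      set φ : (Fin n → F) →ₗ[F] F :=
        { toFun := fun u => u ⬝ᵥ B.mulVec v
          map_add' := fun u w => by simp [add_dotProduct]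
          map_smul' := fun a u => by simp [smul_dotProduct] } with hφ
      have hφ0 : φ = 0 := b.ext fun t => hβv t
      ext x
      have hx : φ (Pi.single x 1) = 0 := by rw [hφ0]; rfl
      rw [hφ] at hx
      simp only [LinearMap.coe_mk, AddHom.coe_mk] at hx
      rw [single_dotProduct, one_mul] at hx
      exact hx
    have hvq : v ∈ q := by
      rw [hv]
      refine Submodule.sum_mem q fun j _ => Submodule.smul_mem q _ ?_
      rw [hinl]
      exact (bq j).2
    have hvker : v ∈ LinearMap.ker f := by
      rw [LinearMap.mem_ker, hf, Matrix.mulVecLin_apply]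
      exact hBv
    have hv0 : v = 0 := by
      have hd : Disjoint (LinearMap.ker f) q := hq.disjoint
      exact (Submodule.disjoint_def.mp hd) v hvker hvq
    -- conclude c = 0 from linear independence
    have hli : LinearIndependent F (fun j => (b (Sum.inl j) : Fin n → F)) :=
      b.linearIndependent.comp Sum.inl Sum.inl_injective
    have := Fintype.linearIndependent_iff.mp hli c (by rw [← hv]; exact hv0)
    funext j
    exact this j
  have hB₁d : IsUnit B₁.det := by
    rw [isUnit_iff_ne_zero]
    intro h0
    obtain ⟨v, hvne, hv0⟩ := (Matrix.exists_mulVec_eq_zero_iff.mpr h0)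
    exact hvne (hB₁inj v hv0)
  -- V₀ is invertible
  have hV₀d : IsUnit V₀.det := by
    set b' : Basis (Fin n) F (Fin n → F) := b.reindex σ.symm with hb'
    have hVeq : V₀ = ((Pi.basisFun F (Fin n)).toMatrix ⇑b')ᵀ := by
      ext i x
      rw [hV₀, Matrix.transpose_apply, Basis.toMatrix_apply, Pi.basisFun_repr, hb',
        Basis.reindex_apply]
      simp
    have hmul := Basis.toMatrix_mul_toMatrix_flip (Pi.basisFun F (Fin n)) b'
    have hdet : ((Pi.basisFun F (Fin n)).toMatrix ⇑b').det * (b'.toMatrix ⇑(Pi.basisFun F (Fin n))).det = 1 := by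
      rw [← Matrix.det_mul, hmul, Matrix.det_one]
    rw [hVeq, Matrix.det_transpose]
    exact IsUnit.of_mul_eq_one _ hdet
  refine ⟨V₀, B₁, hV₀d, hB₁s, hB₁d, ?_⟩
  ext i j
  rw [hVB, Matrix.submatrix_apply]
  rcases σ i with i' | i' <;> rcases σ j with j' | j'
  · rw [Matrix.fromBlocks_apply₁₁, hB₁]
    rfl
  · rw [Matrix.fromBlocks_apply₁₂]
    exact hkerβ _ _ (by rw [hinr]; exact (bk j').2)
  · rw [Matrix.fromBlocks_apply₂₁, hβsymm]
    exact hkerβ _ _ (by rw [hinr]; exact (bk i').2)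
  · rw [Matrix.fromBlocks_apply₂₂, hβsymm]
    exact hkerβ _ _ (by rw [hinr]; exact (bk i').2)
end NormalForm

/-- Let `p` be prime, `e ≥ 1`, `0 ≤ k ≤ n`, and let `B ∈ Sym_n(𝔽_p)` have
corank `k` (i.e. rank `n - k`). Then for every symmetric `H' ∈ Sym_m(ℤ/p^eℤ)`, the proportion,
among symmetric `H ∈ Sym_n(ℤ/p^eℤ)` reducing to `B` mod `p`, of those with
`Cok_*(H) ≃ Cok_*(H')` equals the proportion, among symmetric `H_k ∈ Sym_k(ℤ/p^eℤ)` with all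
entries in `pℤ/p^eℤ`, of those with `Cok_*(H_k) ≃ Cok_*(H')`. -/
theorem stmt_18 {p : ℕ} (hp : p.Prime) {e : ℕ} (he : 1 ≤ e) {n k : ℕ} (hk : k ≤ n)
    (B : Matrix (Fin n) (Fin n) (ZMod p)) (hBs : B.IsSymm) (hBr : B.rank = n - k)
    (m : ℕ) (H' : Matrix (Fin m) (Fin m) (ZMod (p ^ e))) (hH' : H'.IsSymm) :
    (Nat.card {H : Matrix (Fin n) (Fin n) (ZMod (p ^ e)) //
        H.IsSymm ∧
        H.map (ZMod.castHom (dvd_pow_self p (Nat.one_le_iff_ne_zero.mp he)) (ZMod p)) = B ∧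
        QuasiPairedIso H H'} : ℚ) /
      (Nat.card {H : Matrix (Fin n) (Fin n) (ZMod (p ^ e)) //
        H.IsSymm ∧
        H.map (ZMod.castHom (dvd_pow_self p (Nat.one_le_iff_ne_zero.mp he)) (ZMod p)) = B} : ℚ) =
    (Nat.card {H : Matrix (Fin k) (Fin k) (ZMod (p ^ e)) //
        H.IsSymm ∧ (∀ i j, (p : ZMod (p ^ e)) ∣ H i j) ∧ QuasiPairedIso H H'} : ℚ) /
      (Nat.card {H : Matrix (Fin k) (Fin k) (ZMod (p ^ e)) //
        H.IsSymm ∧ ∀ i j, (p : ZMod (p ^ e)) ∣ H i j} : ℚ) := by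
  classical
  haveI : NeZero (p ^ e) := ⟨pow_ne_zero e hp.pos.ne'⟩
  haveI : NeZero p := ⟨hp.pos.ne'⟩
  haveI : Fact p.Prime := ⟨hp⟩
  have hdvd : p ∣ p ^ e := dvd_pow_self p (Nat.one_le_iff_ne_zero.mp he)
  have hrk : (n - k) + k = n := Nat.sub_add_cancel hk
  set σ : Fin n ≃ (Fin (n - k) ⊕ Fin k) := (finCongr hrk.symm).trans finSumFinEquiv.symm with hσ
  obtain ⟨V₀, B₁, hV₀d, hB₁s, hB₁d, hcong⟩ := exists_normal_form hrk B hBs hBr σ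
  -- lift V₀ to an invertible matrix over ZMod (p ^ e)
  set V₁ : Matrix (Fin n) (Fin n) (ZMod (p ^ e)) :=
    Matrix.of (fun i j => ((V₀ i j).val : ZMod (p ^ e))) with hV₁
  have hV₁red : V₁.map (ZMod.castHom hdvd (ZMod p)) = V₀ := by
    ext i j
    exact pi_lift' hdvd _
  have hV₁d : IsUnit V₁.det := by
    refine (isUnit_iff_pi_ne' hdvd hp _).mpr ?_
    rw [RingHom.map_det, RingHom.mapMatrix_apply, hV₁red]
    exact hV₀d.ne_zero
  have hV₁u : IsUnit V₁ := (Matrix.isUnit_iff_isUnit_det V₁).mpr hV₁d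
  have hV : ((hV₁u.unit : Matrix (Fin n) (Fin n) (ZMod (p ^ e))).map
        (ZMod.castHom hdvd (ZMod p))) * B *
      ((hV₁u.unit : Matrix (Fin n) (Fin n) (ZMod (p ^ e))).map
        (ZMod.castHom hdvd (ZMod p)))ᵀ
      = (Matrix.fromBlocks B₁ 0 0 (0 : Matrix (Fin k) (Fin k) (ZMod p))).submatrix ⇑σ ⇑σ := by
    rw [hV₁u.unit_spec, hV₁red]
    exact hcong
  have hc1 := key_count hp hdvd σ B B₁ hB₁d hV₁u.unit hV
    (fun ι _ _ M => QuasiPairedIso M H')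
    (by intro ι κ _ _ _ _ M N h; exact quasiPairedIso_congr h H')
    (by intro ι κ _ _ _ _ A K hAs hAd; exact quasiPairedIso_fromBlocks_iff hAs hAd K H')
  have hc2 := key_count hp hdvd σ B B₁ hB₁d hV₁u.unit hV
    (fun ι _ _ M => True)
    (by intro ι κ _ _ _ _ M N h; exact Iff.rfl)
    (by intro ι κ _ _ _ _ A K hAs hAd; exact Iff.rfl)
  -- restate with the literal predicates of the goal
  set cA : ℕ := Nat.card {A : Matrix (Fin (n - k)) (Fin (n - k)) (ZMod (p ^ e)) //
      A.IsSymm ∧ A.map (ZMod.castHom hdvd (ZMod p)) = B₁} with hcA_def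
  set cC : ℕ := Nat.card {C : Matrix (Fin (n - k)) (Fin k) (ZMod (p ^ e)) //
      C.map (ZMod.castHom hdvd (ZMod p)) = 0} with hcC_def
  have hc1' : Nat.card {H : Matrix (Fin n) (Fin n) (ZMod (p ^ e)) //
        H.IsSymm ∧
        H.map (ZMod.castHom (dvd_pow_self p (Nat.one_le_iff_ne_zero.mp he)) (ZMod p)) = B ∧
        QuasiPairedIso H H'}
      = (cA * cC) * Nat.card {H : Matrix (Fin k) (Fin k) (ZMod (p ^ e)) //
        H.IsSymm ∧ (∀ i j, (p : ZMod (p ^ e)) ∣ H i j) ∧ QuasiPairedIso H H'} := hc1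
  have hc2' : Nat.card {H : Matrix (Fin n) (Fin n) (ZMod (p ^ e)) //
        H.IsSymm ∧
        H.map (ZMod.castHom (dvd_pow_self p (Nat.one_le_iff_ne_zero.mp he)) (ZMod p)) = B ∧ True}
      = (cA * cC) * Nat.card {H : Matrix (Fin k) (Fin k) (ZMod (p ^ e)) //
        H.IsSymm ∧ (∀ i j, (p : ZMod (p ^ e)) ∣ H i j) ∧ True} := hc2
  have hden : Nat.card {H : Matrix (Fin n) (Fin n) (ZMod (p ^ e)) //
        H.IsSymm ∧
        H.map (ZMod.castHom (dvd_pow_self p (Nat.one_le_iff_ne_zero.mp he)) (ZMod p)) = B}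
      = (cA * cC) * Nat.card {H : Matrix (Fin k) (Fin k) (ZMod (p ^ e)) //
        H.IsSymm ∧ ∀ i j, (p : ZMod (p ^ e)) ∣ H i j} := by
    rw [Nat.card_congr (Equiv.subtypeEquivRight (q := fun H : Matrix (Fin n) (Fin n)
        (ZMod (p ^ e)) => H.IsSymm ∧
        H.map (ZMod.castHom (dvd_pow_self p (Nat.one_le_iff_ne_zero.mp he)) (ZMod p)) = B ∧ True)
        (fun H => ⟨fun h => ⟨h.1, h.2, trivial⟩, fun h => ⟨h.1, h.2.1⟩⟩)), hc2',
      Nat.card_congr (Equiv.subtypeEquivRight (p := fun H : Matrix (Fin k) (Fin k)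
        (ZMod (p ^ e)) => H.IsSymm ∧ (∀ i j, (p : ZMod (p ^ e)) ∣ H i j) ∧ True)
        (q := fun H : Matrix (Fin k) (Fin k) (ZMod (p ^ e)) =>
          H.IsSymm ∧ ∀ i j, (p : ZMod (p ^ e)) ∣ H i j)
        (fun H => ⟨fun h => ⟨h.1, h.2.1⟩, fun h => ⟨h.1, h.2, trivial⟩⟩))]
  -- positivity of the constant
  have hcA : cA ≠ 0 := by
    have hne : Nonempty {A : Matrix (Fin (n - k)) (Fin (n - k)) (ZMod (p ^ e)) //
        A.IsSymm ∧ A.map (ZMod.castHom hdvd (ZMod p)) = B₁} := by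
      refine ⟨⟨Matrix.of (fun i j => (((B₁ i j).val : ℕ) : ZMod (p ^ e))), ?_, ?_⟩⟩
      · ext i j
        have h := congrFun (congrFun hB₁s i) j
        simp only [Matrix.transpose_apply, Matrix.of_apply]
        rw [show B₁ j i = B₁ i j from h]
      · ext i j
        exact pi_lift' hdvd _
    exact Nat.card_ne_zero.mpr ⟨hne, inferInstance⟩
  have hcC : cC ≠ 0 := by
    have hne : Nonempty {C : Matrix (Fin (n - k)) (Fin k) (ZMod (p ^ e)) //
        C.map (ZMod.castHom hdvd (ZMod p)) = 0} := by
      refine ⟨⟨0, ?_⟩⟩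
      ext i j
      simp
    exact Nat.card_ne_zero.mpr ⟨hne, inferInstance⟩
  have hne' : ((cA : ℚ)) * (cC : ℚ) ≠ 0 :=
    mul_ne_zero (Nat.cast_ne_zero.mpr hcA) (Nat.cast_ne_zero.mpr hcC)
  rw [hc1', hden]
  push_cast
  rw [mul_div_mul_left _ _ hne']
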